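/- (Standard deviation of the Doppler cut) For every real f, the standard deviation of the normalized zero-delay cut satisfies std[|Λ_yy(0, f)| / |Λ_yy(0, 0)|] ≤ √( (1 − sinc²(π f ρ))/M ) · |sinc(π f T_p)|, where |Λ_yy(0,0)| = M T_p, std denotes the square root of the variance, and sinc(x) = sin(x)/x with sinc(0) = 1. -/

import Mathlib

open MeasureTheory ProbabilityTheory Real Finset

/-- Rectangular pulse of width `Tp`: equals `1` on `(0, Tp]` and `0` elsewhere. -/
noncomputable def pulse (Tp t : ℝ) : ℂ :=
  if 0 < t ∧ t ≤ Tp then 1 else 0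

/-- Pulse train of `M` pulses with nominal PRI `Tr`, pulse width `Tp`, and jitters `ε`. -/
noncomputable def train (M : ℕ) (Tr Tp : ℝ) (ε : ℕ → ℝ) (t : ℝ) : ℂ :=
  ∑ m ∈ Finset.range M, pulse Tp (t - m * Tr - ε m)

/-- Ambiguity function `Λ_uu(τ, f) = ∫ u(t) u*(t-τ) e^{-j2πft} dt`. -/
noncomputable def AF (u : ℝ → ℂ) (τ f : ℝ) : ℂ :=
  ∫ t : ℝ, u t * (starRingEnd ℂ) (u (t - τ)) * Complex.exp (-(2 * Real.pi * f * t) * Complex.I)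

/-- `_root_.sinc x = sin x / x`, with `_root_.sinc 0 = 1`. -/
noncomputable def _root_.sinc (x : ℝ) : ℝ := if x = 0 then 1 else Real.sin x / x

lemma abs_sinc_le_one (x : ℝ) : |_root_.sinc x| ≤ 1 := by
  unfold _root_.sinc
  split_ifs with h
  · simp
  · rw [abs_div]
    exact div_le_one_of_le₀ abs_sin_le_abs (abs_nonneg x)

lemma norm_exp_I_sub_one (θ : ℝ) : ‖Complex.exp (θ * Complex.I) - 1‖ = 2 * |Real.sin (θ / 2)| := by
  have h1 : Real.cos θ = 2 * Real.cos (θ/2) ^ 2 - 1 := by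
    rw [← Real.cos_two_mul]; ring_nf
  have h2 : Real.sin (θ/2) ^ 2 + Real.cos (θ/2) ^ 2 = 1 := Real.sin_sq_add_cos_sq _
  have h3 : Real.sin θ ^ 2 + Real.cos θ ^ 2 = 1 := Real.sin_sq_add_cos_sq _
  rw [Complex.norm_def, Complex.normSq_apply]
  rw [Complex.exp_mul_I]
  have hre : (Complex.cos θ + Complex.sin θ * Complex.I - 1).re = Real.cos θ - 1 := by
    simp [Complex.cos_ofReal_re, Complex.sin_ofReal_im]
  have him : (Complex.cos θ + Complex.sin θ * Complex.I - 1).im = Real.sin θ := by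
    simp [Complex.cos_ofReal_im, Complex.sin_ofReal_re]
  rw [hre, him]
  have key : (Real.cos θ - 1) * (Real.cos θ - 1) + Real.sin θ * Real.sin θ
      = (2 * |Real.sin (θ/2)|) ^ 2 := by
    rw [mul_pow, sq_abs]
    nlinarith
  rw [key, Real.sqrt_sq (by positivity)]

lemma norm_G (f Tp : ℝ) (hTp : 0 < Tp) :
    ‖∫ t in (0:ℝ)..Tp, Complex.exp (-(2 * (π:ℂ) * f) * Complex.I * t)‖
      = Tp * |_root_.sinc (π * f * Tp)| := by
  by_cases hf : f = 0
  · subst hf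
    simp [_root_.sinc, Real.pi_ne_zero, abs_of_pos hTp]
  · have hπf : π * f ≠ 0 := mul_ne_zero Real.pi_ne_zero hf
    have hc : (-(2 * (π:ℂ) * f) * Complex.I) ≠ 0 := by
      simp [Complex.ext_iff, Real.pi_ne_zero, hf]
    have harg : ∀ x : ℝ, (-(2 * (π:ℂ) * f) * Complex.I) * x = ((-(2 * π * f * x) : ℝ) : ℂ) * Complex.I := by
      intro x; push_cast; ring
    rw [show (fun t : ℝ => Complex.exp (-(2 * (π:ℂ) * f) * Complex.I * t))
        = fun t : ℝ => Complex.exp ((-(2 * (π:ℂ) * f) * Complex.I) * t) from rfl]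
    rw [integral_exp_mul_complex hc]
    rw [harg Tp, harg 0]
    simp only [mul_zero, neg_zero, Complex.ofReal_zero, zero_mul, Complex.exp_zero]
    rw [norm_div, norm_exp_I_sub_one]
    have hnc : ‖(-(2 * (π:ℂ) * f) * Complex.I)‖ = 2 * π * |f| := by
      rw [show (-(2 * (π:ℂ) * f) * Complex.I) = ((-(2*π*f):ℝ):ℂ) * Complex.I by push_cast; ring]
      rw [norm_mul, Complex.norm_real, Real.norm_eq_abs, Complex.norm_I, mul_one, abs_neg, abs_mul, abs_mul]
      simp [abs_of_pos Real.pi_pos]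
    rw [hnc]
    have hs : _root_.sinc (π * f * Tp) = Real.sin (π * f * Tp) / (π * f * Tp) := by
      rw [_root_.sinc, if_neg (by exact mul_ne_zero hπf hTp.ne')]
    rw [hs]
    rw [show -(2 * π * f * Tp) / 2 = -(π * f * Tp) by ring, Real.sin_neg, abs_neg]
    rw [abs_div, abs_mul, abs_mul, abs_of_pos Real.pi_pos, abs_of_pos hTp]
    field_simp

lemma integral_exp_uniform (f ρ : ℝ) (hρ : 0 < ρ) :
    ∫ x : ℝ, Complex.exp (-(2 * (π:ℂ) * f) * Complex.I * x)
        ∂((ENNReal.ofReal ρ)⁻¹ • volume.restrict (Set.Ioo (-(ρ/2)) (ρ/2)))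
      = ((_root_.sinc (π * f * ρ) : ℝ) : ℂ) := by
  rw [integral_smul_measure]
  rw [ENNReal.toReal_inv, ENNReal.toReal_ofReal hρ.le]
  have hle : -(ρ/2) ≤ ρ/2 := by linarith
  have hIoo : ∫ x in Set.Ioo (-(ρ/2)) (ρ/2), Complex.exp (-(2 * (π:ℂ) * f) * Complex.I * x)
      = ∫ x in (-(ρ/2))..(ρ/2), Complex.exp (-(2 * (π:ℂ) * f) * Complex.I * x) := by
    rw [intervalIntegral.integral_of_le hle, integral_Ioc_eq_integral_Ioo]
  rw [hIoo]
  by_cases hf : f = 0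
  · subst hf
    simp only [Complex.ofReal_zero, mul_zero, zero_mul, neg_zero, Complex.exp_zero]
    simp [_root_.sinc]
    exact inv_mul_cancel₀ (by exact_mod_cast hρ.ne')
  · have hπf : π * f ≠ 0 := mul_ne_zero Real.pi_ne_zero hf
    have hc : (-(2 * (π:ℂ) * f) * Complex.I) ≠ 0 := by
      simp [Complex.ext_iff, Real.pi_ne_zero, hf]
    rw [integral_exp_mul_complex hc]
    have e1 : (-(2 * (π:ℂ) * f) * Complex.I) * ((ρ/2 : ℝ) : ℂ) = -((π * f * ρ : ℝ) : ℂ) * Complex.I := by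
      push_cast; ring
    have e2 : (-(2 * (π:ℂ) * f) * Complex.I) * ((-(ρ/2) : ℝ) : ℂ) = ((π * f * ρ : ℝ) : ℂ) * Complex.I := by
      push_cast; ring
    rw [e1, e2]
    have hsin : Complex.exp (-((π * f * ρ : ℝ) : ℂ) * Complex.I)
        - Complex.exp (((π * f * ρ : ℝ) : ℂ) * Complex.I)
        = -(2 * Complex.I * Complex.sin ((π * f * ρ : ℝ) : ℂ)) := by
      rw [Complex.sin]
      field_simp [Complex.I_ne_zero]
      ring_nf
      rw [Complex.I_sq]
      ring
    rw [hsin]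
    have hs : _root_.sinc (π * f * ρ) = Real.sin (π * f * ρ) / (π * f * ρ) := by
      rw [_root_.sinc, if_neg (mul_ne_zero hπf hρ.ne')]
    have hπ : ((π:ℝ):ℂ) ≠ 0 := by exact_mod_cast Real.pi_ne_zero
    have hfc : ((f:ℝ):ℂ) ≠ 0 := by exact_mod_cast hf
    have hρc : ((ρ:ℝ):ℂ) ≠ 0 := by exact_mod_cast hρ.ne'
    rw [hs, Complex.real_smul, ← Complex.ofReal_sin]
    have hstep : -(2 * Complex.I * ((Real.sin (π * f * ρ) : ℝ) : ℂ)) / (-(2 * (π:ℂ) * f) * Complex.I)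
        = ((Real.sin (π * f * ρ) : ℝ) : ℂ) / ((π:ℂ) * f) := by
      rw [div_eq_div_iff hc (mul_ne_zero hπ hfc)]
      ring
    rw [hstep]
    push_cast
    field_simp
    try ring
    try exact Or.inl trivial

lemma indep_integral_complex_mul {Ω : Type*} [MeasurableSpace Ω] {μ : Measure Ω}
    {X Y : Ω → ℂ} (h : IndepFun X Y μ) (hX : Integrable X μ) (hY : Integrable Y μ) :
    ∫ ω, X ω * Y ω ∂μ = (∫ ω, X ω ∂μ) * ∫ ω, Y ω ∂μ := by
  have hXY : Integrable (fun ω => X ω * Y ω) μ := h.integrable_mul hX hY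
  have hXr : Integrable (fun ω => (X ω).re) μ := by simpa using hX.re
  have hXi : Integrable (fun ω => (X ω).im) μ := by simpa using hX.im
  have hYr : Integrable (fun ω => (Y ω).re) μ := by simpa using hY.re
  have hYi : Integrable (fun ω => (Y ω).im) μ := by simpa using hY.im
  have hrr : ∫ ω, (X ω).re * (Y ω).re ∂μ = (∫ ω, (X ω).re ∂μ) * ∫ ω, (Y ω).re ∂μ :=
    (h.comp Complex.measurable_re Complex.measurable_re).integral_fun_mul_eq_mul_integral hXr.aestronglyMeasurable hYr.aestronglyMeasurable
  have hri : ∫ ω, (X ω).re * (Y ω).im ∂μ = (∫ ω, (X ω).re ∂μ) * ∫ ω, (Y ω).im ∂μ :=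
    (h.comp Complex.measurable_re Complex.measurable_im).integral_fun_mul_eq_mul_integral hXr.aestronglyMeasurable hYi.aestronglyMeasurable
  have hir : ∫ ω, (X ω).im * (Y ω).re ∂μ = (∫ ω, (X ω).im ∂μ) * ∫ ω, (Y ω).re ∂μ :=
    (h.comp Complex.measurable_im Complex.measurable_re).integral_fun_mul_eq_mul_integral hXi.aestronglyMeasurable hYr.aestronglyMeasurable
  have hii : ∫ ω, (X ω).im * (Y ω).im ∂μ = (∫ ω, (X ω).im ∂μ) * ∫ ω, (Y ω).im ∂μ :=
    (h.comp Complex.measurable_im Complex.measurable_im).integral_fun_mul_eq_mul_integral hXi.aestronglyMeasurable hYi.aestronglyMeasurable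
  have irr : Integrable (fun ω => (X ω).re * (Y ω).re) μ :=
    (h.comp Complex.measurable_re Complex.measurable_re).integrable_mul hXr hYr
  have iri : Integrable (fun ω => (X ω).re * (Y ω).im) μ :=
    (h.comp Complex.measurable_re Complex.measurable_im).integrable_mul hXr hYi
  have iir : Integrable (fun ω => (X ω).im * (Y ω).re) μ :=
    (h.comp Complex.measurable_im Complex.measurable_re).integrable_mul hXi hYr
  have iii : Integrable (fun ω => (X ω).im * (Y ω).im) μ :=
    (h.comp Complex.measurable_im Complex.measurable_im).integrable_mul hXi hYi
  have eXr : (∫ ω, X ω ∂μ).re = ∫ ω, (X ω).re ∂μ := by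
    have := integral_re (μ := μ) hX; simpa using this.symm
  have eXi : (∫ ω, X ω ∂μ).im = ∫ ω, (X ω).im ∂μ := by
    have := integral_im (μ := μ) hX; simpa using this.symm
  have eYr : (∫ ω, Y ω ∂μ).re = ∫ ω, (Y ω).re ∂μ := by
    have := integral_re (μ := μ) hY; simpa using this.symm
  have eYi : (∫ ω, Y ω ∂μ).im = ∫ ω, (Y ω).im ∂μ := by
    have := integral_im (μ := μ) hY; simpa using this.symm
  have eP : (∫ ω, X ω * Y ω ∂μ).re = ∫ ω, (X ω * Y ω).re ∂μ := by
    have := integral_re (μ := μ) hXY; simpa using this.symm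
  have ePi : (∫ ω, X ω * Y ω ∂μ).im = ∫ ω, (X ω * Y ω).im ∂μ := by
    have := integral_im (μ := μ) hXY; simpa using this.symm
  apply Complex.ext
  · rw [eP, Complex.mul_re, eXr, eXi, eYr, eYi, ← hrr, ← hii]
    simp_rw [Complex.mul_re]
    exact integral_sub irr iii
  · rw [ePi, Complex.mul_im, eXr, eXi, eYr, eYi, ← hri, ← hir]
    simp_rw [Complex.mul_im]
    exact integral_add iri iir

lemma conj_pulse (Tp x : ℝ) : (starRingEnd ℂ) (pulse Tp x) = pulse Tp x := by
  rw [pulse]; split_ifs <;> simp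

lemma pulse_mul_self (Tp x : ℝ) : pulse Tp x * pulse Tp x = pulse Tp x := by
  rw [pulse]; split_ifs <;> simp

lemma pulse_mul_pulse_ne {Tp x y t : ℝ} (h : Tp < y - x) :
    pulse Tp (t - x) * pulse Tp (t - y) = 0 := by
  rw [pulse, pulse]
  split_ifs with h1 h2 h2
  · exfalso; linarith [h1.2, h2.1]
  all_goals simp

lemma AF_train (M : ℕ) (Tr Tp ρ f : ℝ) (hTp : 0 < Tp) (hρ : 0 < ρ) (hρTr : ρ ≤ Tr - 2*Tp)
    (e : ℕ → ℝ) (he : ∀ m, m < M → |e m| < ρ/2) :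
    AF (train M Tr Tp e) 0 f
      = (∑ m ∈ range M,
          Complex.exp (-(2 * (π:ℂ) * f) * Complex.I * (((m : ℝ) * Tr + e m : ℝ) : ℂ)))
        * ∫ t in (0:ℝ)..Tp, Complex.exp (-(2 * (π:ℂ) * f) * Complex.I * t) := by
  set c : ℂ := -(2 * (π:ℂ) * f) * Complex.I with hc
  have hTr : 0 < Tr := by nlinarith
  have hexp : ∀ t : ℝ, Complex.exp (-(2 * (π:ℂ) * f * t) * Complex.I) = Complex.exp (c * t) := by
    intro t; rw [hc]; congr 1; push_cast; ring
  have hprod : ∀ t : ℝ, train M Tr Tp e t * (starRingEnd ℂ) (train M Tr Tp e t)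
      = ∑ m ∈ range M, pulse Tp (t - ((m : ℝ) * Tr + e m)) := by
    intro t
    rw [train, map_sum, Finset.sum_mul_sum]
    refine Finset.sum_congr rfl (fun m hm => ?_)
    rw [Finset.mem_range] at hm
    rw [Finset.sum_eq_single m ?off ?notin]
    · rw [conj_pulse, show t - (m:ℝ) * Tr - e m = t - ((m:ℝ) * Tr + e m) by ring]
      exact pulse_mul_self _ _
    case notin => intro hcon; exact absurd (Finset.mem_range.2 hm) hcon
    case off =>
      intro n hn hne
      rw [Finset.mem_range] at hn
      rw [conj_pulse,
        show t - (m:ℝ) * Tr - e m = t - ((m:ℝ) * Tr + e m) by ring,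
        show t - (n:ℝ) * Tr - e n = t - ((n:ℝ) * Tr + e n) by ring]
      have hem := abs_lt.1 (he m hm)
      have hen := abs_lt.1 (he n hn)
      rcases lt_or_gt_of_ne (Ne.symm hne) with hlt | hgt
      · have h1 : (1 : ℝ) ≤ (n : ℝ) - (m : ℝ) := by
          have : m + 1 ≤ n := hlt
          have := (Nat.cast_le (α := ℝ)).2 this
          push_cast at this; linarith
        have : Tp < ((n:ℝ) * Tr + e n) - ((m:ℝ) * Tr + e m) := by nlinarith
        exact pulse_mul_pulse_ne this
      · have h1 : (1 : ℝ) ≤ (m : ℝ) - (n : ℝ) := by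
          have : n + 1 ≤ m := hgt
          have := (Nat.cast_le (α := ℝ)).2 this
          push_cast at this; linarith
        have : Tp < ((m:ℝ) * Tr + e m) - ((n:ℝ) * Tr + e n) := by nlinarith
        rw [mul_comm]
        exact pulse_mul_pulse_ne this
  have hind : ∀ a : ℝ, (fun t => pulse Tp (t - a) * Complex.exp (c * t))
      = Set.indicator (Set.Ioc a (a + Tp)) (fun t => Complex.exp (c * t)) := by
    intro a; funext t
    by_cases h : t ∈ Set.Ioc a (a + Tp)
    · rw [Set.indicator_of_mem h, pulse, if_pos ⟨by linarith [h.1], by linarith [h.2]⟩, one_mul]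
    · rw [Set.indicator_of_notMem h, pulse, if_neg, zero_mul]
      intro hcon
      exact h ⟨by linarith [hcon.1], by linarith [hcon.2]⟩
  have hcont : Continuous fun t : ℝ => Complex.exp (c * t) :=
    Complex.continuous_exp.comp (continuous_const.mul Complex.continuous_ofReal)
  have hint : ∀ a : ℝ, Integrable (fun t => pulse Tp (t - a) * Complex.exp (c * t)) volume := by
    intro a; rw [hind a]
    exact (integrable_indicator_iff measurableSet_Ioc).2 hcont.integrableOn_Ioc
  have hkey : ∀ a : ℝ, (∫ t : ℝ, pulse Tp (t - a) * Complex.exp (c * t))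
      = Complex.exp (c * a) * ∫ t in (0:ℝ)..Tp, Complex.exp (c * t) := by
    intro a
    rw [hind a, integral_indicator measurableSet_Ioc,
      ← intervalIntegral.integral_of_le (by linarith : a ≤ a + Tp)]
    have h2 := intervalIntegral.integral_comp_add_right (a := 0) (b := Tp)
      (fun x : ℝ => Complex.exp (c * x)) a
    rw [zero_add] at h2
    rw [show a + Tp = Tp + a by ring, ← h2]
    have h3 : ∀ x : ℝ, Complex.exp (c * ((x + a : ℝ) : ℂ))
        = Complex.exp (c * a) * Complex.exp (c * x) := by
      intro x; rw [← Complex.exp_add]; congr 1; push_cast; ring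
    simp_rw [h3]
    rw [intervalIntegral.integral_const_mul]
  rw [AF]
  have hfe : (fun t : ℝ => train M Tr Tp e t * (starRingEnd ℂ) (train M Tr Tp e (t - 0))
        * Complex.exp (-(2 * (π:ℂ) * f * t) * Complex.I))
      = fun t : ℝ => ∑ m ∈ range M, pulse Tp (t - ((m : ℝ) * Tr + e m)) * Complex.exp (c * t) := by
    funext t
    rw [sub_zero, hexp t, hprod t, Finset.sum_mul]
  rw [hfe, integral_finset_sum (range M) (fun m _ => hint _),
    Finset.sum_congr rfl (fun m _ => hkey _), ← Finset.sum_mul]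

lemma variance_congr_ae {Ω : Type*} [MeasurableSpace Ω] {μ : Measure Ω} {X Y : Ω → ℝ}
    (h : X =ᵐ[μ] Y) : variance X μ = variance Y μ := by
  rw [variance, variance, evariance, evariance, integral_congr_ae h]
  congr 1
  apply lintegral_congr_ae
  filter_upwards [h] with ω hω
  rw [hω]

/-- **Standard deviation of the Doppler cut.** For every `f`,
`std[|Λ_yy(0,f)|/(M Tp)] ≤ √((1 - sinc²(π f ρ))/M) |_root_.sinc(π f Tp)|`. -/
theorem doppler_cut_std
    {Ω : Type*} [MeasurableSpace Ω] (μ : Measure Ω) [IsProbabilityMeasure μ]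
    (M : ℕ) (hM : 1 ≤ M) (Tr Tp ρ : ℝ) (hTp : 0 < Tp) (hρ : 0 < ρ)
    (hρTr : ρ ≤ Tr - 2 * Tp)
    (ε : ℕ → Ω → ℝ) (hε0 : ∀ ω, ε 0 ω = 0)
    (hmeas : ∀ m, Measurable (ε m))
    (hdist : ∀ m, 1 ≤ m → m ≤ M - 1 →
      Measure.map (ε m) μ = (ENNReal.ofReal ρ)⁻¹ • volume.restrict (Set.Ioo (-(ρ / 2)) (ρ / 2)))
    (hindep : iIndepFun (fun m : Fin M => ε (m : ℕ)) μ)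
    (f : ℝ) :
    Real.sqrt (variance (fun ω => ‖AF (train M Tr Tp (fun k => ε k ω)) 0 f‖ / ((M : ℝ) * Tp)) μ)
      ≤ Real.sqrt ((1 - _root_.sinc (Real.pi * f * ρ) ^ 2) / M) * |_root_.sinc (Real.pi * f * Tp)| := by
  have hM0 : 0 < (M:ℝ) := by exact_mod_cast hM
  set s : ℝ := _root_.sinc (π * f * ρ) with hsdef
  set cp : ℝ := |_root_.sinc (π * f * Tp)| with hcpdef
  set g : ℝ → ℂ := fun x : ℝ => Complex.exp (-(2 * (π:ℂ) * f) * Complex.I * x) with hgdef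
  have hgcont : Continuous g := by
    rw [hgdef]
    exact Complex.continuous_exp.comp (continuous_const.mul Complex.continuous_ofReal)
  have hgnorm : ∀ x : ℝ, ‖g x‖ = 1 := by
    intro x
    rw [hgdef]
    simp only
    rw [show (-(2 * (π:ℂ) * f) * Complex.I) * (x:ℂ) = ((-(2*π*f*x):ℝ):ℂ) * Complex.I by push_cast; ring]
    rw [Complex.norm_exp_ofReal_mul_I]
  set Z : ℕ → Ω → ℂ := fun m ω => g ((m:ℝ) * Tr + ε m ω) with hZdef
  have hZmeas : ∀ m, Measurable (Z m) := fun m =>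
    hgcont.measurable.comp ((hmeas m).const_add _)
  have hZnorm : ∀ m ω, ‖Z m ω‖ = 1 := fun m ω => hgnorm _
  have hZint : ∀ m, Integrable (Z m) μ := by
    intro m
    refine (integrable_const (1:ℝ)).mono' (hZmeas m).aestronglyMeasurable ?_
    exact ae_of_all _ fun ω => le_of_eq (hZnorm m ω)
  have hZconjint : ∀ m, Integrable (fun ω => (starRingEnd ℂ) (Z m ω)) μ := by
    intro m
    refine (integrable_const (1:ℝ)).mono'
      ((continuous_star.measurable.comp (hZmeas m)).aestronglyMeasurable) ?_
    exact ae_of_all _ fun ω => by rw [RCLike.norm_conj]; exact le_of_eq (hZnorm m ω)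
  set S : Ω → ℂ := fun ω => ∑ m ∈ range M, Z m ω with hSdef
  have hSmeas : Measurable S := by
    rw [hSdef]; exact Finset.measurable_sum _ (fun m _ => hZmeas m)
  have hSnorm : ∀ ω, ‖S ω‖ ≤ M := by
    intro ω
    calc ‖S ω‖ ≤ ∑ m ∈ range M, ‖Z m ω‖ := norm_sum_le _ _
    _ = M := by simp [hZnorm]
  set Y : Ω → ℝ := fun ω => ‖S ω‖ / M with hYdef
  have hYmeas : Measurable Y := hSmeas.norm.div_const _
  have hYnonneg : ∀ ω, 0 ≤ Y ω := fun ω => by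
    rw [hYdef]; positivity
  have hYle : ∀ ω, Y ω ≤ 1 := fun ω => by
    rw [hYdef]; exact div_le_one_of_le₀ (hSnorm ω) hM0.le
  have hYm2 : MemLp Y 2 μ :=
    MemLp.of_bound hYmeas.aestronglyMeasurable 1
      (ae_of_all _ fun ω => by
        rw [Real.norm_eq_abs, abs_of_nonneg (hYnonneg ω)]; exact hYle ω)
  set I : ℕ → ℂ := fun m => ∫ ω, Z m ω ∂μ with hIdef
  have hdiag : ∀ m ω, Z m ω * (starRingEnd ℂ) (Z m ω) = 1 := by
    intro m ω
    rw [Complex.mul_conj]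
    rw [show Complex.normSq (Z m ω) = 1 by
      rw [Complex.normSq_eq_norm_sq, hZnorm]; norm_num]
    norm_num
  have hprodint : ∀ m n, Integrable (fun ω => Z m ω * (starRingEnd ℂ) (Z n ω)) μ := by
    intro m n
    refine (integrable_const (1:ℝ)).mono'
      (((hZmeas m).mul (continuous_star.measurable.comp (hZmeas n))).aestronglyMeasurable) ?_
    refine ae_of_all _ fun ω => ?_
    rw [norm_mul, RCLike.norm_conj, hZnorm, hZnorm]
    norm_num
  have hoff : ∀ m n, m < M → n < M → m ≠ n →
      (∫ ω, Z m ω * (starRingEnd ℂ) (Z n ω) ∂μ) = I m * (starRingEnd ℂ) (I n) := by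
    intro m n hm hn hmn
    have hie : IndepFun (ε m) (ε n) μ :=
      hindep.indepFun (i := ⟨m, hm⟩) (j := ⟨n, hn⟩) (by simp [Fin.ext_iff]; exact hmn)
    have h2 : IndepFun (Z m) (fun ω => (starRingEnd ℂ) (Z n ω)) μ := by
      have := hie.comp (φ := fun x : ℝ => g ((m:ℝ) * Tr + x))
        (ψ := fun x : ℝ => (starRingEnd ℂ) (g ((n:ℝ) * Tr + x)))
        (hgcont.measurable.comp (measurable_const.add measurable_id))
        (continuous_star.measurable.comp (hgcont.measurable.comp (measurable_const.add measurable_id)))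
      exact this
    rw [indep_integral_complex_mul h2 (hZint m) (hZconjint n)]
    congr 1
    exact integral_conj
  have hI0 : I 0 = 1 := by
    rw [hIdef]
    simp only
    have hz : ∀ ω, Z 0 ω = 1 := by
      intro ω
      rw [hZdef]
      simp only [Nat.cast_zero, zero_mul, hε0 ω, add_zero, hgdef]
      simp
    simp_rw [hz]
    simp
  have hIs : ∀ m, 1 ≤ m → m < M → Complex.normSq (I m) = s^2 := by
    intro m h1 h2
    have hmap := hdist m h1 (Nat.le_sub_one_of_lt h2)
    have hsplit : ∀ ω, Z m ω = Complex.exp (-(2 * (π:ℂ) * f) * Complex.I * (((m:ℝ) * Tr : ℝ):ℂ)) * g (ε m ω) := by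
      intro ω
      rw [hZdef, hgdef]
      simp only
      rw [← Complex.exp_add]
      congr 1
      push_cast
      ring
    have hIm : I m = Complex.exp (-(2 * (π:ℂ) * f) * Complex.I * (((m:ℝ) * Tr : ℝ):ℂ)) * ((s:ℝ):ℂ) := by
      rw [hIdef]
      simp only
      simp_rw [hsplit]
      rw [integral_const_mul]
      congr 1
      have hmapint : ∫ ω, g (ε m ω) ∂μ = ∫ x, g x ∂(Measure.map (ε m) μ) :=
        (integral_map (hmeas m).aemeasurable hgcont.aestronglyMeasurable).symm
      rw [hmapint, hmap, hgdef, hsdef]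
      exact integral_exp_uniform f ρ hρ
    rw [hIm, Complex.normSq_mul, Complex.normSq_ofReal]
    rw [show Complex.normSq (Complex.exp (-(2 * (π:ℂ) * f) * Complex.I * (((m:ℝ) * Tr : ℝ):ℂ))) = 1 by
      rw [Complex.normSq_eq_norm_sq]
      rw [show Complex.exp (-(2 * (π:ℂ) * f) * Complex.I * (((m:ℝ) * Tr : ℝ):ℂ)) = g ((m:ℝ) * Tr) by rw [hgdef]]
      rw [hgnorm]
      norm_num]
    ring
  have hsle : s^2 ≤ 1 := by
    have h := _root_.abs_sinc_le_one (π * f * ρ)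
    rw [← hsdef] at h
    nlinarith [abs_nonneg s, sq_abs s]
  have hIm_ge : ∀ m ∈ range M, s^2 ≤ Complex.normSq (I m) := by
    intro m hm
    rw [Finset.mem_range] at hm
    rcases Nat.eq_zero_or_pos m with h0 | h1
    · subst h0
      rw [hI0]
      simpa using hsle
    · rw [hIs m h1 hm]
  have hTdiag : ∀ m, (∫ ω, Z m ω * (starRingEnd ℂ) (Z m ω) ∂μ) = 1 := by
    intro m
    simp_rw [hdiag m]
    simp
  have hSint : Integrable S μ := by
    rw [hSdef]; exact integrable_finset_sum _ (fun m _ => hZint m)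
  have hIS : ∫ ω, S ω ∂μ = ∑ m ∈ range M, I m := by
    rw [hSdef]; exact integral_finset_sum _ (fun m _ => hZint m)
  have hEY : ‖∑ m ∈ range M, I m‖ / M ≤ ∫ ω, Y ω ∂μ := by
    rw [hYdef]
    rw [integral_div]
    gcongr
    rw [← hIS]
    exact norm_integral_le_integral_norm S
  have hSSint : Integrable (fun ω => S ω * (starRingEnd ℂ) (S ω)) μ := by
    refine (integrable_const ((M:ℝ)^2)).mono'
      ((hSmeas.mul (continuous_star.measurable.comp hSmeas)).aestronglyMeasurable) ?_
    refine ae_of_all _ fun ω => ?_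
    rw [norm_mul, RCLike.norm_conj]
    calc ‖S ω‖ * ‖S ω‖ ≤ (M:ℝ) * M := by
          exact mul_le_mul (hSnorm ω) (hSnorm ω) (norm_nonneg _) hM0.le
    _ = (M:ℝ)^2 := by ring
  have hU : ∫ ω, S ω * (starRingEnd ℂ) (S ω) ∂μ
      = ∑ m ∈ range M, ∑ n ∈ range M, ∫ ω, Z m ω * (starRingEnd ℂ) (Z n ω) ∂μ := by
    have hpt : ∀ ω, S ω * (starRingEnd ℂ) (S ω)
        = ∑ m ∈ range M, ∑ n ∈ range M, Z m ω * (starRingEnd ℂ) (Z n ω) := by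
      intro ω
      rw [hSdef]
      simp only
      rw [map_sum, Finset.sum_mul_sum]
    simp_rw [hpt]
    rw [integral_finset_sum _ (fun m _ => integrable_finset_sum _ (fun n _ => hprodint m n))]
    exact Finset.sum_congr rfl fun m _ => integral_finset_sum _ (fun n _ => hprodint m n)
  have hEY2 : ∫ ω, (Y^2) ω ∂μ = (∫ ω, S ω * (starRingEnd ℂ) (S ω) ∂μ).re / (M:ℝ)^2 := by
    have hre := integral_re (μ := μ) hSSint
    simp only [RCLike.re_to_complex] at hre
    rw [← hre]
    have hpt2 : ∀ ω, (Y^2) ω = (S ω * (starRingEnd ℂ) (S ω)).re / (M:ℝ)^2 := by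
      intro ω
      rw [Pi.pow_apply, hYdef]
      simp only
      rw [Complex.mul_conj, Complex.ofReal_re, Complex.normSq_eq_norm_sq]
      rw [div_pow]
    simp_rw [hpt2]
    rw [integral_div]
  have hdiffsum : (∑ m ∈ range M, ∑ n ∈ range M, ∫ ω, Z m ω * (starRingEnd ℂ) (Z n ω) ∂μ)
      - ∑ m ∈ range M, ∑ n ∈ range M, I m * (starRingEnd ℂ) (I n)
      = ∑ m ∈ range M, (1 - I m * (starRingEnd ℂ) (I m)) := by
    rw [← Finset.sum_sub_distrib]
    refine Finset.sum_congr rfl fun m hm => ?_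
    rw [← Finset.sum_sub_distrib]
    rw [Finset.sum_eq_single m ?off ?notin]
    · rw [hTdiag m]
    case notin => intro h; exact absurd hm h
    case off =>
      intro n hn hne
      rw [hoff m n (Finset.mem_range.1 hm) (Finset.mem_range.1 hn) (Ne.symm hne)]
      exact sub_self _
  have hvarY : variance Y μ ≤ (1 - s^2) / M := by
    rw [variance_eq_sub hYm2]
    have hVre : Complex.normSq (∑ m ∈ range M, I m)
        = (∑ m ∈ range M, ∑ n ∈ range M, I m * (starRingEnd ℂ) (I n)).re := by
      rw [← Finset.sum_mul_sum, ← map_sum, Complex.mul_conj, Complex.ofReal_re]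
    have hB : Complex.normSq (∑ m ∈ range M, I m) / (M:ℝ)^2 ≤ (∫ ω, Y ω ∂μ)^2 := by
      have h2 : (‖∑ m ∈ range M, I m‖ / M)^2 ≤ (∫ ω, Y ω ∂μ)^2 := by
        apply pow_le_pow_left₀ (by positivity) hEY
      rw [div_pow] at h2
      rw [Complex.normSq_eq_norm_sq]
      exact h2
    have hDre : ((∑ m ∈ range M, (1 - I m * (starRingEnd ℂ) (I m)))).re ≤ (M:ℝ) * (1 - s^2) := by
      rw [Complex.re_sum]
      calc ∑ m ∈ range M, (1 - I m * (starRingEnd ℂ) (I m)).re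
          ≤ ∑ _m ∈ range M, (1 - s^2) := by
            refine Finset.sum_le_sum fun m hm => ?_
            rw [Complex.sub_re, Complex.one_re, Complex.mul_conj, Complex.ofReal_re]
            linarith [hIm_ge m hm]
      _ = (M:ℝ) * (1 - s^2) := by
            rw [Finset.sum_const, Finset.card_range, nsmul_eq_mul]
    have hchain : (∫ ω, S ω * (starRingEnd ℂ) (S ω) ∂μ).re
        - Complex.normSq (∑ m ∈ range M, I m) ≤ (M:ℝ) * (1 - s^2) := by
      rw [hU, hVre, ← Complex.sub_re, hdiffsum]
      exact hDre
    calc ∫ ω, (Y^2) ω ∂μ - (∫ ω, Y ω ∂μ)^2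
        ≤ (∫ ω, S ω * (starRingEnd ℂ) (S ω) ∂μ).re / (M:ℝ)^2
          - Complex.normSq (∑ m ∈ range M, I m) / (M:ℝ)^2 := by
          rw [hEY2]; linarith [hB]
    _ = ((∫ ω, S ω * (starRingEnd ℂ) (S ω) ∂μ).re
          - Complex.normSq (∑ m ∈ range M, I m)) / (M:ℝ)^2 := by ring
    _ ≤ ((M:ℝ) * (1 - s^2)) / (M:ℝ)^2 := by
          apply div_le_div_of_nonneg_right hchain (by positivity) |>.trans_eq rfl
    _ = (1 - s^2) / M := by
          field_simp
  have haefull : ∀ᵐ ω ∂μ, ∀ m : ℕ, m < M → |ε m ω| < ρ/2 := by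
    rw [ae_all_iff]
    intro m
    by_cases hm : m < M
    · rcases Nat.eq_zero_or_pos m with h0 | h1
      · subst h0
        refine ae_of_all _ fun ω _ => ?_
        rw [hε0 ω, abs_zero]
        positivity
      · have hmap := hdist m h1 (Nat.le_sub_one_of_lt hm)
        have hone : μ (ε m ⁻¹' Set.Ioo (-(ρ/2)) (ρ/2)) = 1 := by
          have hval : Measure.map (ε m) μ (Set.Ioo (-(ρ/2)) (ρ/2)) = 1 := by
            rw [hmap, Measure.smul_apply, Measure.restrict_apply measurableSet_Ioo,
              Set.inter_self, Real.volume_Ioo, show ρ/2 - -(ρ/2) = ρ by ring, smul_eq_mul]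
            exact ENNReal.inv_mul_cancel (by simpa using hρ) ENNReal.ofReal_ne_top
          rwa [Measure.map_apply (hmeas m) measurableSet_Ioo] at hval
        have hae : ∀ᵐ ω ∂μ, ε m ω ∈ Set.Ioo (-(ρ/2)) (ρ/2) := by
          have hcompl := (prob_compl_eq_zero_iff ((hmeas m) measurableSet_Ioo)).2 hone
          rw [ae_iff]
          convert hcompl using 2
          rfl
        filter_upwards [hae] with ω hmem _
        exact abs_lt.2 ⟨hmem.1, hmem.2⟩
    · exact ae_of_all _ fun ω h => absurd h hm
  have haeX : (fun ω => ‖AF (train M Tr Tp (fun k => ε k ω)) 0 f‖ / ((M : ℝ) * Tp))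
      =ᵐ[μ] fun ω => cp * Y ω := by
    filter_upwards [haefull] with ω hω
    rw [AF_train M Tr Tp ρ f hTp hρ hρTr (fun k => ε k ω) hω]
    rw [norm_mul]
    have hsum : (∑ m ∈ range M,
        Complex.exp (-(2 * (π:ℂ) * f) * Complex.I * (((m : ℝ) * Tr + ε m ω : ℝ) : ℂ))) = S ω := by
      rw [hSdef]
    rw [hsum, norm_G f Tp hTp, ← hcpdef, hYdef]
    field_simp
    try ring
  rw [variance_congr_ae haeX, variance_const_mul cp Y μ]
  calc Real.sqrt (cp^2 * variance Y μ) = cp * Real.sqrt (variance Y μ) := by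
        rw [Real.sqrt_mul (sq_nonneg cp), Real.sqrt_sq (abs_nonneg _)]
  _ ≤ cp * Real.sqrt ((1 - s^2) / M) :=
        mul_le_mul_of_nonneg_left (Real.sqrt_le_sqrt hvarY) (abs_nonneg _)
  _ = Real.sqrt ((1 - s^2) / M) * cp := mul_comm _ _
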